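/- If R:Λ is integrally closed (i.e. R:Λ = (R:Λ)R̄ ∩ R, equivalently R:Λ = R_{i_0} for the appropriate index), then d(R:Λ) = 0. -/

import Mathlib

open Submodule IsLocalRing Order

noncomputable section

/-- Length of an `R`-module, defined as the Krull dimension of its submodule lattice. -/
def modLength (R : Type*) [Ring R] (M : Type*) [AddCommGroup M] [Module R M] : WithBot ℕ∞ :=
  Order.krullDim (Submodule R M)

/-- Length of the quotient `I / J` for submodules `J ≤ I` of an ambient module. -/
def qlen (R : Type*) [CommRing R] {K : Type*} [AddCommGroup K] [Module R K]
    (I J : Submodule R K) : WithBot ℕ∞ :=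
  modLength R (I ⧸ (J.comap I.subtype))

/-- The image of an ideal of `R` in `K`, viewed as an `R`-submodule of `K`. -/
def idl (R : Type*) [CommRing R] (K : Type*) [CommRing K] [Algebra R K] (I : Ideal R) :
    Submodule R K :=
  Submodule.map (Algebra.linearMap R K) I

/-- The blowing-up `Λ(I) = ⋃ₙ (Iⁿ : Iⁿ)` of `R` along `I`, inside `K`. -/
def blowup (R : Type*) [CommRing R] (K : Type*) [CommRing K] [Algebra R K] (I : Ideal R) :
    Submodule R K :=
  ⨆ n : ℕ, (idl R K I ^ n) / (idl R K I ^ n)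

/-- The set of values of the nonzero elements of a fractional ideal. -/
def vvals {R : Type*} [CommRing R] {K : Type*} [CommRing K] [Algebra R K]
    (v : K → WithTop ℤ) (J : Submodule R K) : Set (WithTop ℤ) :=
  v '' {y | y ∈ J ∧ y ≠ 0}

section Aux

lemma krullDim_exists_series {α : Type*} [Preorder α] [Nonempty α] {n : ℕ}
    (h : Order.krullDim α = n) : ∃ p : LTSeries α, p.length = n := by
  rw [Order.krullDim_eq_iSup_length] at h
  have h' : (⨆ p : LTSeries α, (p.length : ℕ∞)) = n := by exact_mod_cast h
  by_contra hc
  push_neg at hc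
  rcases Nat.eq_zero_or_pos n with hn | hn
  · subst hn
    exact hc (RelSeries.singleton _ (Classical.arbitrary α)) rfl
  · have hle : (⨆ p : LTSeries α, (p.length : ℕ∞)) ≤ ((n - 1 : ℕ) : ℕ∞) := by
      apply iSup_le
      intro p
      have h1 : (p.length : ℕ∞) ≤ n := h' ▸ le_iSup (fun p : LTSeries α => (p.length : ℕ∞)) p
      have h2 : p.length ≤ n := by exact_mod_cast h1
      exact Nat.cast_le.mpr (Nat.le_pred_of_lt (lt_of_le_of_ne h2 (hc p)))
    rw [h'] at hle
    have : n ≤ n - 1 := by exact_mod_cast hle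
    omega

lemma krullDim_Icc_self {α : Type*} [PartialOrder α] (a : α) :
    Order.krullDim (Set.Icc a a) = 0 := by
  have : Unique (Set.Icc a a) :=
    ⟨⟨⟨a, le_rfl, le_rfl⟩⟩, fun z => Subtype.ext (le_antisymm z.2.2 z.2.1)⟩
  exact Order.krullDim_eq_zero_of_unique

lemma krullDim_Icc_simple {α : Type*} [PartialOrder α] {X Y : α} (hXY : X < Y)
    (h : ∀ Z, X ≤ Z → Z ≤ Y → Z = X ∨ Z = Y) : Order.krullDim (Set.Icc X Y) = 1 := by
  have hne : Nonempty (Set.Icc X Y) := ⟨⟨X, le_rfl, hXY.le⟩⟩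
  apply le_antisymm
  · rw [Order.krullDim_eq_iSup_length]
    have : (⨆ p : LTSeries (Set.Icc X Y), (p.length : ℕ∞)) ≤ (1 : ℕ∞) := by
      apply iSup_le
      intro p
      by_contra hlen
      have h2 : 2 ≤ p.length := by
        by_contra hh
        exact hlen (by exact_mod_cast Nat.le_of_lt_succ (by omega : p.length < 2))
      have h01 : p ⟨0, by omega⟩ < p ⟨1, by omega⟩ := p.strictMono (Fin.mk_lt_mk.mpr (by omega))
      have h12 : p ⟨1, by omega⟩ < p ⟨2, by omega⟩ := p.strictMono (Fin.mk_lt_mk.mpr (by omega))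
      rcases h (p ⟨1, by omega⟩).1 (p ⟨1, by omega⟩).2.1 (p ⟨1, by omega⟩).2.2 with h1 | h1
      · exact absurd (lt_of_lt_of_le h01 (h1.le.trans (p ⟨0, by omega⟩).2.1)) (lt_irrefl _)
      · exact absurd (lt_of_le_of_lt ((p ⟨2, by omega⟩).2.2.trans h1.ge) h12) (lt_irrefl _)
    exact_mod_cast this
  · have : (1 : ℕ) ≤ Order.krullDim (Set.Icc X Y) := by
      have := LTSeries.length_le_krullDim
        ((RelSeries.singleton _ (⟨Y, hXY.le, le_rfl⟩ : Set.Icc X Y)).cons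
          ⟨X, le_rfl, hXY.le⟩ (show (⟨X, le_rfl, hXY.le⟩ : Set.Icc X Y) < ⟨Y, hXY.le, le_rfl⟩ from Subtype.mk_lt_mk.mpr hXY))
      exact this
    exact_mod_cast this

lemma krullDim_Icc_add {α : Type*} [Lattice α] [IsModularLattice α] {A B C : α}
    (hCB : C ≤ B) (hBA : B ≤ A) {p q : ℕ}
    (h1 : Order.krullDim (Set.Icc C B) = q) (h2 : Order.krullDim (Set.Icc B A) = p) :
    Order.krullDim (Set.Icc C A) = (q + p : ℕ) := by
  have hCA : C ≤ A := hCB.trans hBA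
  have hne : Nonempty (Set.Icc C A) := ⟨⟨C, le_rfl, hCA⟩⟩
  have hne1 : Nonempty (Set.Icc C B) := ⟨⟨C, le_rfl, hCB⟩⟩
  have hne2 : Nonempty (Set.Icc B A) := ⟨⟨B, le_rfl, hBA⟩⟩
  apply le_antisymm
  · rw [Order.krullDim_eq_iSup_length]
    have main : (⨆ x : LTSeries (Set.Icc C A), (x.length : ℕ∞)) ≤ ((q + p : ℕ) : ℕ∞) := by
      apply iSup_le
      intro x
      set f : Fin (x.length + 1) → Set.Icc C B :=
        fun i => ⟨(x i).1 ⊓ B, le_inf (x i).2.1 hCB, inf_le_right⟩ with hf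
      set g : Fin (x.length + 1) → Set.Icc B A :=
        fun i => ⟨(x i).1 ⊔ B, le_sup_right, sup_le (x i).2.2 hBA⟩ with hg
      have hqf : ∀ z : Set.Icc C B, Order.height z ≤ (q : ℕ∞) := by
        intro z
        have := Order.height_le_krullDim z
        rw [h1] at this
        exact_mod_cast this
      have hpg : ∀ z : Set.Icc B A, Order.height z ≤ (p : ℕ∞) := by
        intro z
        have := Order.height_le_krullDim z
        rw [h2] at this
        exact_mod_cast this
      have hmono : ∀ i j : Fin (x.length + 1), i ≤ j → f i ≤ f j ∧ g i ≤ g j := by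
        intro i j hij
        have hx : (x i).1 ≤ (x j).1 := Subtype.coe_le_coe.mpr (x.monotone hij)
        exact ⟨Subtype.mk_le_mk.mpr (inf_le_inf_right _ hx),
          Subtype.mk_le_mk.mpr (sup_le_sup_right hx _)⟩
      have key : ∀ i : Fin x.length, f i.castSucc < f i.succ ∨ g i.castSucc < g i.succ := by
        intro i
        have hx : x i.castSucc < x i.succ := x.strictMono (Fin.castSucc_lt_succ (i := i))
        have hx' : (x i.castSucc).1 ≤ (x i.succ).1 := Subtype.coe_le_coe.mpr hx.le
        have hfle := (hmono _ _ (Fin.castSucc_lt_succ (i := i)).le).1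
        have hgle := (hmono _ _ (Fin.castSucc_lt_succ (i := i)).le).2
        by_contra hcon
        push_neg at hcon
        have hfeq : f i.castSucc = f i.succ := hfle.lt_or_eq.resolve_left hcon.1
        have hgeq : g i.castSucc = g i.succ := hgle.lt_or_eq.resolve_left hcon.2
        have hval : (x i.castSucc).1 = (x i.succ).1 := by
          refine eq_of_le_of_inf_le_of_sup_le (z := B) hx' (le_of_eq ?_) (le_of_eq ?_)
          · exact (congrArg Subtype.val hfeq).symm
          · exact (congrArg Subtype.val hgeq).symm
        exact hx.ne (Subtype.ext hval)
      have main2 : ∀ i : Fin (x.length + 1),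
          (i.1 : ℕ∞) ≤ Order.height (f i) + Order.height (g i) := by
        intro i
        induction i using Fin.induction with
        | zero => simp
        | succ i ih =>
          have hstep : Order.height (f i.castSucc) + Order.height (g i.castSucc) + 1 ≤
              Order.height (f i.succ) + Order.height (g i.succ) := by
            rcases key i with hk | hk
            · have hfin : Order.height (f i.castSucc) < ⊤ :=
                lt_of_le_of_lt (hqf _) (ENat.coe_lt_top q)
              have h1' : Order.height (f i.castSucc) + 1 ≤ Order.height (f i.succ) :=
                ENat.add_one_le_iff hfin.ne |>.mpr (Order.height_strictMono hk hfin)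
              have h2' : Order.height (g i.castSucc) ≤ Order.height (g i.succ) :=
                Order.height_mono (hmono _ _ (Fin.castSucc_lt_succ (i := i)).le).2
              calc Order.height (f i.castSucc) + Order.height (g i.castSucc) + 1
                  = (Order.height (f i.castSucc) + 1) + Order.height (g i.castSucc) := by ring
                _ ≤ Order.height (f i.succ) + Order.height (g i.succ) := add_le_add h1' h2'
            · have hfin : Order.height (g i.castSucc) < ⊤ :=
                lt_of_le_of_lt (hpg _) (ENat.coe_lt_top p)
              have h1' : Order.height (g i.castSucc) + 1 ≤ Order.height (g i.succ) :=
                ENat.add_one_le_iff hfin.ne |>.mpr (Order.height_strictMono hk hfin)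
              have h2' : Order.height (f i.castSucc) ≤ Order.height (f i.succ) :=
                Order.height_mono (hmono _ _ (Fin.castSucc_lt_succ (i := i)).le).1
              calc Order.height (f i.castSucc) + Order.height (g i.castSucc) + 1
                  = Order.height (f i.castSucc) + (Order.height (g i.castSucc) + 1) := by ring
                _ ≤ Order.height (f i.succ) + Order.height (g i.succ) := add_le_add h2' h1'
          have hcast : ((i.succ : Fin (x.length + 1)).1 : ℕ∞) = (i.1 : ℕ∞) + 1 := by
            simp [Fin.val_succ]
          rw [hcast]
          exact le_trans (add_le_add_left ih 1) hstep
      have hlast := main2 (Fin.last x.length)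
      have : (x.length : ℕ∞) ≤ (q : ℕ∞) + (p : ℕ∞) :=
        le_trans hlast (add_le_add (hqf _) (hpg _))
      exact_mod_cast this
    exact_mod_cast main
  · obtain ⟨p1, hp1⟩ := krullDim_exists_series h1
    obtain ⟨p2, hp2⟩ := krullDim_exists_series h2
    let e1 : LTSeries (Set.Icc C A) :=
      p1.map (fun z => ⟨z.1, z.2.1, z.2.2.trans hBA⟩) (fun _ _ hab => Subtype.mk_lt_mk.mpr hab)
    let e2 : LTSeries (Set.Icc C A) :=
      p2.map (fun z => ⟨z.1, hCB.trans z.2.1, z.2.2⟩) (fun _ _ hab => Subtype.mk_lt_mk.mpr hab)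
    set BI : Set.Icc C A := ⟨B, hCB, hBA⟩ with hBI
    have hl1 : e1.last ≤ BI := Subtype.mk_le_mk.mpr (p1.last).2.2
    have hh2 : BI ≤ e2.head := Subtype.mk_le_mk.mpr (p2.head).2.1
    have hgoal : ∀ s : LTSeries (Set.Icc C A), q + p ≤ s.length →
        ((q + p : ℕ) : WithBot ℕ∞) ≤ Order.krullDim (Set.Icc C A) := by
      intro s hs
      refine le_trans ?_ (LTSeries.length_le_krullDim s)
      exact_mod_cast Nat.cast_le.mpr hs
    obtain ⟨E1, hE1len, hE1last⟩ : ∃ E1 : LTSeries (Set.Icc C A), q ≤ E1.length ∧ E1.last = BI := by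
      by_cases hc1 : e1.last = BI
      · exact ⟨e1, le_of_eq hp1.symm, hc1⟩
      · refine ⟨e1.snoc BI (lt_of_le_of_ne hl1 (fun h => hc1 (Subtype.ext h))), ?_, by simp⟩
        show q ≤ p1.length + 1; omega
    obtain ⟨E2, hE2len, hE2head⟩ : ∃ E2 : LTSeries (Set.Icc C A), p ≤ E2.length ∧ E2.head = BI := by
      by_cases hc2 : e2.head = BI
      · exact ⟨e2, le_of_eq hp2.symm, hc2⟩
      · refine ⟨e2.cons BI (lt_of_le_of_ne hh2 (fun h => hc2 (Subtype.ext h.symm))), ?_, by simp⟩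
        simp only [RelSeries.cons_length]; show p ≤ p2.length + 1; omega
    exact hgoal (E1.smash E2 (hE1last.trans hE2head.symm)) (by
      show q + p ≤ E1.length + E2.length
      omega)

lemma qlen_eq_krullDim_Icc (R : Type*) [CommRing R] {K : Type*} [AddCommGroup K] [Module R K]
    {X Y : Submodule R K} (h : X ≤ Y) : qlen R Y X = Order.krullDim (Set.Icc X Y) := by
  set X' : Submodule R Y := X.comap Y.subtype with hX'
  have e2 : {p' : Submodule R Y // X' ≤ p'} ≃o Set.Icc X Y :=
    { toFun := fun z => ⟨map Y.subtype z.1,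
        by
          have h1 : map Y.subtype X' = X := by
            rw [hX', Submodule.map_comap_subtype, inf_eq_right.mpr h]
          exact ⟨h1 ▸ Submodule.map_mono z.2, Submodule.map_subtype_le Y z.1⟩⟩
      invFun := fun z => ⟨comap Y.subtype z.1, Submodule.comap_mono z.2.1⟩
      left_inv := fun z => Subtype.ext
        (Submodule.comap_map_eq_of_injective Subtype.val_injective z.1)
      right_inv := fun z => Subtype.ext (by
        simp only
        rw [Submodule.map_comap_subtype, inf_eq_right.mpr z.2.2])
      map_rel_iff' := by
        intro z w
        constructor
        · intro hzw
          have hzw' : map Y.subtype z.1 ≤ map Y.subtype w.1 := hzw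
          have := Submodule.comap_mono (f := Y.subtype) hzw'
          rwa [Submodule.comap_map_eq_of_injective Subtype.val_injective,
            Submodule.comap_map_eq_of_injective Subtype.val_injective] at this
        · exact fun hzw => Submodule.map_mono hzw }
  have e : Submodule R (Y ⧸ X') ≃o Set.Icc X Y := (Submodule.comapMkQRelIso X').trans e2
  exact Order.krullDim_eq_of_orderIso e

end Aux

theorem stmt_13
    (R : Type*) [CommRing R] [IsDomain R] [IsLocalRing R] [IsNoetherianRing R]
    (K : Type*) [Field K] [Algebra R K] [IsFractionRing R K]
    [IsDiscreteValuationRing (integralClosure R K)]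
    [Module.Finite R (integralClosure R K)]
    (hres : ∀ y : integralClosure R K, ∃ a : R,
      y - algebraMap R (integralClosure R K) a ∈ maximalIdeal (integralClosure R K))
    (hkinf : Infinite (ResidueField R))
    (v : K → WithTop ℤ) (hv0 : ∀ y : K, v y = ⊤ ↔ y = 0)
    (hvmul : ∀ y z : K, v (y * z) = v y + v z)
    (hvadd : ∀ y z : K, min (v y) (v z) ≤ v (y + z))
    (t : K) (ht : t ∈ integralClosure R K) (hvt : v t = 1)
    (hvRbar : ∀ y : K, y ∈ integralClosure R K ↔ 0 ≤ v y)
    (I : Ideal R) (hI0 : I ≠ ⊥) (hIrad : I.radical = maximalIdeal R)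
    (hInp : ¬ I.IsPrincipal)
    (x : R) (hxI : x ∈ I)
    (ν : ℕ) (hν : IsLeast {n : ℕ | ∀ k ≥ n, I ^ (k + 1) = Ideal.span {x} * I ^ k} ν)
    (ω : Submodule R K) (hω1 : 1 ≤ ω) (hω2 : ω < ((integralClosure R K).toSubmodule))
    (hωω : ω / ω = 1)
    (hωdual : ∀ J : Submodule R K, J ≠ ⊥ → J.FG → ω / (ω / J) = J)
    (δ : ℕ) (hδ : (δ : WithBot ℕ∞) = qlen R ((integralClosure R K).toSubmodule) 1)
    (c : ℕ) (hc : (c : WithBot ℕ∞) = qlen R ((integralClosure R K).toSubmodule) ((1 : Submodule R K) / ((integralClosure R K).toSubmodule)))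
    (n : ℕ) (hn : n + δ = c)
    (s : ℕ → ℕ) (hs0 : s 0 = 0) (hsc : s n = c) (hsmono : StrictMonoOn s (Set.Iic n))
    (hsval : ∀ i ≤ n, ((s i : ℕ) : WithTop ℤ) ∈ vvals v (1 : Submodule R K))
    (hsall : ∀ m : ℕ, (m : WithTop ℤ) ∈ vvals v (1 : Submodule R K) → m ≤ c → ∃ i ≤ n, s i = m)
    (Rmod : ℕ → Submodule R K)
    (hRmod : ∀ i, ∀ y : K, y ∈ Rmod i ↔ (y ∈ (1 : Submodule R K) ∧ (s i : WithTop ℤ) ≤ v y))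
    (r : ℕ → ℕ)
    (hr : ∀ i, 1 ≤ i → i ≤ n → (r i : WithBot ℕ∞) =
      qlen R ((1 : Submodule R K) / Rmod i) ((1 : Submodule R K) / Rmod (i - 1)))
    (Γ : Set ℕ)
    (hΓ : Γ = {i : ℕ | 1 ≤ i ∧ i ≤ n ∧ (s (i - 1) : WithTop ℤ) ∈ vvals v ((1 : Submodule R K) / (blowup R K I))})
    (b : ℕ) (hb : (b : WithBot ℕ∞) = qlen R ((integralClosure R K).toSubmodule) ((1 : Submodule R K) / ((1 : Submodule R K) / (blowup R K I))))
    (d : ℤ) (hd : d = (b : ℤ) - ∑ i ∈ Finset.Icc 1 n, Γ.indicator (fun j => (r j : ℤ)) i)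
    (hic : (1 : Submodule R K) / (blowup R K I) = (((1 : Submodule R K) / (blowup R K I)) * ((integralClosure R K).toSubmodule)) ⊓ 1) :
    d = 0 := by
  classical
  set A := integralClosure R K with hA
  set Rb : Submodule R K := A.toSubmodule with hRb
  -- basic valuation facts
  have hv1 : v 1 = 0 := by
    have h := hvmul 1 1
    rw [mul_one] at h
    have hne : v 1 ≠ ⊤ := fun hh => one_ne_zero ((hv0 1).mp hh)
    obtain ⟨z, hz⟩ := WithTop.ne_top_iff_exists.mp hne
    rw [← hz] at h ⊢
    norm_cast at h ⊢
    omega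
  have halg : ∀ r : R, 0 ≤ v (algebraMap R K r) := fun r =>
    (hvRbar _).mp (A.algebraMap_mem r)
  have hvz0 : v (0 : K) = ⊤ := (hv0 0).mpr rfl
  have hvnetop : ∀ y : K, y ≠ 0 → v y ≠ ⊤ := fun y hy hh => hy ((hv0 y).mp hh)
  have hcancel : ∀ (a b c : WithTop ℤ), a ≠ ⊤ → a + b ≤ a + c → b ≤ c := by
    intro a b c ha h
    exact (WithTop.add_le_add_iff_left ha).mp h
  -- the valuation submodules
  have hMvsub : ∀ a : ℕ, ∃ N : Submodule R K, ∀ y : K, y ∈ N ↔ (a : WithTop ℤ) ≤ v y := by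
    intro a
    refine ⟨{ carrier := {y : K | (a : WithTop ℤ) ≤ v y}
              add_mem' := ?_
              zero_mem' := ?_
              smul_mem' := ?_ }, fun y => Iff.rfl⟩
    · intro y z hy hz
      exact le_trans (le_min hy hz) (hvadd y z)
    · simp only [Set.mem_setOf_eq, hvz0, le_top]
    · intro rr y hy
      simp only [Set.mem_setOf_eq] at hy ⊢
      have h1 : v (rr • y) = v (algebraMap R K rr) + v y := by
        rw [Algebra.smul_def]; exact hvmul _ _
      calc (a : WithTop ℤ) ≤ v y := hy
        _ = 0 + v y := (zero_add _).symm
        _ ≤ v (algebraMap R K rr) + v y := add_le_add_left (halg rr) _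
        _ = v (rr • y) := h1.symm
  choose Mv hMv using hMvsub
  have hMvanti : ∀ a b : ℕ, a ≤ b → Mv b ≤ Mv a := by
    intro a b hab y hy
    rw [hMv] at hy ⊢
    exact le_trans (by exact_mod_cast hab) hy
  have hRbMv : Rb = Mv 0 := by
    ext y
    rw [hMv]
    exact_mod_cast (hvRbar y)
  have htne : t ≠ 0 := fun h => by simp [h, hvz0] at hvt
  have hvtk : ∀ k : ℕ, v (t ^ k) = (k : WithTop ℤ) := by
    intro k
    induction k with
    | zero => simpa using hv1
    | succ k ih =>
      rw [pow_succ, hvmul, ih, hvt]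
      push_cast
      ring
  have htkmem : ∀ k : ℕ, t ^ k ∈ Mv k := by
    intro k; rw [hMv, hvtk]
  have htknot : ∀ k j : ℕ, k < j → t ^ k ∉ Mv j := by
    intro k j hkj hmem
    rw [hMv, hvtk] at hmem
    exact absurd (by exact_mod_cast hmem) (by omega)
  have hMvle : ∀ a b : ℕ, Mv a ≤ Mv b → b ≤ a := by
    intro a b hab
    by_contra hh
    exact htknot a b (by omega) (hab (htkmem a))
  -- membership in 1
  have hone : ∀ y : K, y ∈ (1 : Submodule R K) ↔ ∃ rr : R, algebraMap R K rr = y := by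
    intro y
    rw [Submodule.one_eq_range]
    exact ⟨fun ⟨rr, hrr⟩ => ⟨rr, hrr⟩, fun ⟨rr, hrr⟩ => ⟨rr, hrr⟩⟩
  have h1Mv0 : (1 : Submodule R K) ≤ Mv 0 := by
    intro y hy
    obtain ⟨rr, hrr⟩ := (hone y).mp hy
    rw [hMv]
    exact_mod_cast hrr ▸ halg rr
  have h1Rb : (1 : Submodule R K) ≤ Rb := hRbMv ▸ h1Mv0
  have h1mem : (1 : K) ∈ (1 : Submodule R K) := (hone 1).mpr ⟨1, map_one _⟩
  -- the division trick
  have hdiv : ∀ y z : K, y ≠ 0 → v y ≤ v z → ∃ u : K, u ∈ A ∧ z = y * u := by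
    intro y z hy hvyz
    refine ⟨y⁻¹ * z, ?_, by field_simp⟩
    rw [hvRbar]
    have h2 : y * (y⁻¹ * z) = z := by field_simp
    have h1 : v z = v y + v (y⁻¹ * z) := by
      conv_lhs => rw [← h2]
      exact hvmul _ _
    have h3 : v y + 0 ≤ v y + v (y⁻¹ * z) := by
      rw [add_zero, ← h1]; exact hvyz
    exact hcancel _ _ _ (hvnetop y hy) h3
  -- the key structure lemma
  have hval : ∀ N : Submodule R K, N ≤ Mv 0 → ∀ y : K, y ∈ N → y ≠ 0 →
      ∃ k : ℕ, v y = (k : WithTop ℤ) := by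
    intro N hN0 y hy hyne
    have h0 : ((0:ℕ) : WithTop ℤ) ≤ v y := by
      have := hN0 hy; rwa [hMv] at this
    rw [Nat.cast_zero] at h0
    obtain ⟨z, hz⟩ := WithTop.ne_top_iff_exists.mp (hvnetop y hyne)
    refine ⟨z.toNat, ?_⟩
    rw [← hz]
    have hz0 : (0:ℤ) ≤ z := by rw [← hz] at h0; exact_mod_cast h0
    norm_cast
    omega
  have KSL : ∀ N : Submodule R K, N ≠ ⊥ → N ≤ Mv 0 → (∀ y ∈ N, ∀ u ∈ A, y * u ∈ N) →
      ∃ a : ℕ, N = Mv a := by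
    intro N hNbot hN0 hNstab
    set S : Set ℕ := {k : ℕ | ∃ y, y ∈ N ∧ y ≠ 0 ∧ v y = (k : WithTop ℤ)} with hS
    have hSne : S.Nonempty := by
      obtain ⟨y1, hy1, hy1ne⟩ := (Submodule.ne_bot_iff N).mp hNbot
      obtain ⟨k, hk⟩ := hval N hN0 y1 hy1 hy1ne
      exact ⟨k, y1, hy1, hy1ne, hk⟩
    obtain ⟨y0, hy0N, hy0ne, hvy0⟩ := Nat.sInf_mem hSne
    refine ⟨sInf S, le_antisymm ?_ ?_⟩
    · intro z hz
      rw [hMv]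
      by_cases hz0 : z = 0
      · subst hz0; rw [hvz0]; exact le_top
      · obtain ⟨k, hk⟩ := hval N hN0 z hz hz0
        rw [hk]
        have hsle : sInf S ≤ k := Nat.sInf_le ⟨z, hz, hz0, hk⟩
        exact_mod_cast hsle
    · intro z hz
      rw [hMv] at hz
      by_cases hz0 : z = 0
      · subst hz0; exact N.zero_mem
      · obtain ⟨u, huA, huz⟩ := hdiv y0 z hy0ne (by rw [hvy0]; exact hz)
        rw [huz]
        exact hNstab y0 hy0N u huA
  -- blowup is contained in the integral closure
  have hΛRb : blowup R K I ≤ Rb := by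
    have hIfg : I.FG := IsNoetherian.noetherian I
    have hfgpow : ∀ m : ℕ, (idl R K I ^ m).FG := fun m =>
      Submodule.FG.pow (Submodule.FG.map _ hIfg) m
    obtain ⟨x1, hx1I, hx1ne⟩ := (Submodule.ne_bot_iff I).mp hI0
    have halgne : algebraMap R K x1 ≠ 0 := fun h =>
      hx1ne (IsFractionRing.injective R K (by rw [h, map_zero]))
    have hne : ∀ m : ℕ, idl R K I ^ m ≠ ⊥ := by
      intro m hbot
      have hmem1 : algebraMap R K x1 ∈ idl R K I := ⟨x1, hx1I, rfl⟩
      have hmem : (algebraMap R K x1) ^ m ∈ idl R K I ^ m :=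
        Submodule.pow_mem_pow _ hmem1 m
      rw [hbot, Submodule.mem_bot] at hmem
      exact pow_ne_zero m halgne hmem
    rw [blowup]
    refine iSup_le fun m => ?_
    intro y hy
    rw [Submodule.mem_div_iff_forall_mul_mem] at hy
    have hint : IsIntegral R y := isIntegral_of_smul_mem_submodule (idl R K I ^ m)
      (hne m) (hfgpow m) y (fun z hz => by rw [smul_eq_mul]; exact hy z hz)
    exact (Subalgebra.mem_toSubmodule _).mpr ((mem_integralClosure_iff R K).mpr hint)
  have h1Λ : (1 : K) ∈ blowup R K I := by
    have h0 : (idl R K I ^ 0) / (idl R K I ^ 0) ≤ blowup R K I := by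
      rw [blowup]; exact le_iSup (fun n : ℕ => idl R K I ^ n / idl R K I ^ n) 0
    apply h0
    rw [pow_zero, Submodule.mem_div_iff_forall_mul_mem]
    intro z hz
    rwa [one_mul]
  -- the conductor
  set f : Submodule R K := (1 : Submodule R K) / Rb with hfdef
  have hf1 : f ≤ (1 : Submodule R K) := by
    intro y hy
    rw [hfdef, Submodule.mem_div_iff_forall_mul_mem] at hy
    simpa using hy 1 (h1Rb h1mem)
  have hfbot : f ≠ ⊥ := by
    have hfg : Rb.FG := by
      have h1 : (⊤ : Submodule R A).FG := Module.finite_def.mp ‹Module.Finite R A›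
      have h2 : Submodule.map (A.val.toLinearMap) ⊤ = Rb := by
        ext y
        simp only [Submodule.mem_map, Submodule.mem_top, true_and]
        constructor
        · rintro ⟨z, rfl⟩
          exact (Subalgebra.mem_toSubmodule _).mpr z.2
        · intro hy
          exact ⟨⟨y, (Subalgebra.mem_toSubmodule _).mp hy⟩, rfl⟩
      exact h2 ▸ h1.map _
    obtain ⟨S, hS⟩ := hfg
    obtain ⟨bb, hbb⟩ := IsLocalization.exist_integer_multiples_of_finset (nonZeroDivisors R) S
    have hbne : (bb : R) ≠ 0 := nonZeroDivisors.ne_zero bb.2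
    have hmem : algebraMap R K bb ∈ f := by
      rw [hfdef, Submodule.mem_div_iff_forall_mul_mem]
      intro z hz
      rw [← hS] at hz
      induction hz using Submodule.span_induction with
      | mem w hw =>
        obtain ⟨rr, hrr⟩ := hbb w hw
        rw [hone]
        exact ⟨rr, by rw [hrr, Algebra.smul_def]⟩
      | zero => rw [mul_zero]; exact Submodule.zero_mem _
      | add y1 y2 _ _ hy1 hy2 => rw [mul_add]; exact Submodule.add_mem _ hy1 hy2
      | smul rr y1 _ hy1 =>
        rw [mul_smul_comm]
        exact Submodule.smul_mem _ rr hy1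
    intro hbot
    rw [hbot, Submodule.mem_bot] at hmem
    exact hbne (IsFractionRing.injective R K (by rw [hmem, map_zero]))
  have hfstab : ∀ y ∈ f, ∀ u ∈ A, y * u ∈ f := by
    intro y hy u hu
    rw [hfdef, Submodule.mem_div_iff_forall_mul_mem] at hy ⊢
    intro z hz
    rw [mul_assoc]
    exact hy _ ((Subalgebra.mem_toSubmodule _).mpr (A.mul_mem hu ((Subalgebra.mem_toSubmodule _).mp hz)))
  obtain ⟨γ, hγ⟩ : ∃ γ : ℕ, f = Mv γ := KSL f hfbot (le_trans hf1 h1Mv0) hfstab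
  -- the dual of the blowup
  have hC1 : (1 : Submodule R K) / blowup R K I ≤ (1 : Submodule R K) := by
    intro y hy
    rw [Submodule.mem_div_iff_forall_mul_mem] at hy
    simpa using hy 1 h1Λ
  have hfC : f ≤ (1 : Submodule R K) / blowup R K I := by
    intro y hy
    rw [hfdef, Submodule.mem_div_iff_forall_mul_mem] at hy
    rw [Submodule.mem_div_iff_forall_mul_mem]
    exact fun z hz => hy z (hΛRb hz)
  -- C * Rb = Mv a
  have hCMv0 : (1 : Submodule R K) / blowup R K I ≤ Mv 0 := le_trans hC1 h1Mv0
  obtain ⟨a, ha⟩ : ∃ a : ℕ, ((1 : Submodule R K) / blowup R K I) * Rb = Mv a := by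
    apply KSL
    · intro hbot
      obtain ⟨y1, hy1, hy1ne⟩ := (Submodule.ne_bot_iff f).mp hfbot
      have h1 : y1 ∈ ((1 : Submodule R K) / blowup R K I) * Rb := by
        have := Submodule.mul_mem_mul (hfC hy1) (h1Rb h1mem)
        rwa [mul_one] at this
      rw [hbot, Submodule.mem_bot] at h1
      exact hy1ne h1
    · refine Submodule.mul_le.mpr ?_
      intro y hy u hu
      rw [hMv, Nat.cast_zero, hvmul]
      have hy0 : (0 : WithTop ℤ) ≤ v y := by
        have := hCMv0 hy; rw [hMv, Nat.cast_zero] at this; exact this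
      have hu0 : (0 : WithTop ℤ) ≤ v u := (hvRbar u).mp ((Subalgebra.mem_toSubmodule _).mp hu)
      calc (0 : WithTop ℤ) = 0 + 0 := (add_zero 0).symm
        _ ≤ v y + v u := add_le_add hy0 hu0
    · intro y hy u hu
      refine Submodule.mul_induction_on hy ?_ ?_
      · intro m1 hm1 z hz
        rw [mul_assoc]
        exact Submodule.mul_mem_mul hm1 ((Subalgebra.mem_toSubmodule _).mpr
          (A.mul_mem ((Subalgebra.mem_toSubmodule _).mp hz) hu))
      · intro y1 y2 hh1 hh2
        rw [add_mul]
        exact Submodule.add_mem _ hh1 hh2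
  have hCMa : (1 : Submodule R K) / blowup R K I = Mv a ⊓ 1 := by
    rw [hic, ha]
  have haγ : a ≤ γ := by
    apply hMvle γ a
    rw [← hγ, ← ha]
    intro y hy
    have h1 : y ∈ (1 : Submodule R K) / blowup R K I := hfC hy
    have := Submodule.mul_mem_mul h1 (h1Rb h1mem)
    rwa [mul_one] at this
  -- a witness in C of value a
  obtain ⟨ya, hyaC, hyane, hvya⟩ : ∃ ya : K, ya ∈ (1 : Submodule R K) / blowup R K I ∧
      ya ≠ 0 ∧ v ya = (a : WithTop ℤ) := by
    have hnot : ¬ ((1 : Submodule R K) / blowup R K I ≤ Mv (a + 1)) := by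
      intro hle
      have hprod : ((1 : Submodule R K) / blowup R K I) * Rb ≤ Mv (a + 1) := by
        refine Submodule.mul_le.mpr ?_
        intro y hy u hu
        rw [hMv, hvmul]
        have hy1 : ((a + 1 : ℕ) : WithTop ℤ) ≤ v y := by
          have := hle hy; rwa [hMv] at this
        have hu0 : (0 : WithTop ℤ) ≤ v u := (hvRbar u).mp ((Subalgebra.mem_toSubmodule _).mp hu)
        calc ((a + 1 : ℕ) : WithTop ℤ) = ((a + 1 : ℕ) : WithTop ℤ) + 0 := (add_zero _).symm
          _ ≤ v y + v u := add_le_add hy1 hu0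
      rw [ha] at hprod
      exact htknot a (a + 1) (by omega) (hprod (htkmem a))
    obtain ⟨ya, hyaC, hyanot⟩ := SetLike.not_le_iff_exists.mp hnot
    have hyaMa : ya ∈ Mv a := by
      rw [← ha]
      have := Submodule.mul_mem_mul hyaC (h1Rb h1mem)
      rwa [mul_one] at this
    rw [hMv] at hyaMa
    have hyane : ya ≠ 0 := by
      intro h0
      exact hyanot (by rw [hMv, h0, hvz0]; exact le_top)
    obtain ⟨z, hz⟩ := WithTop.ne_top_iff_exists.mp (hvnetop ya hyane)
    have hz1 : (a : ℤ) ≤ z := by rw [← hz] at hyaMa; exact_mod_cast hyaMa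
    have hz2 : ¬ ((a + 1 : ℤ) ≤ z) := by
      intro hh
      refine hyanot ?_
      rw [hMv, ← hz]
      exact_mod_cast hh
    refine ⟨ya, hyaC, hyane, ?_⟩
    rw [← hz]
    have : z = (a : ℤ) := by omega
    exact_mod_cast this
  -- simple quotients between consecutive valuation modules
  have hsimple : ∀ k : ℕ, Order.krullDim (Set.Icc (Mv (k+1)) (Mv k)) = 1 := by
    intro k
    apply krullDim_Icc_simple
    · refine lt_of_le_of_ne (hMvanti k (k+1) (by omega)) (fun h => ?_)
      exact htknot k (k+1) (by omega) (by rw [h]; exact htkmem k)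
    · intro Z hZ1 hZ2
      by_cases hex : ∃ y ∈ Z, v y = (k : WithTop ℤ)
      · right
        obtain ⟨y, hyZ, hvy⟩ := hex
        have hyne : y ≠ 0 := by
          intro h0
          rw [h0, hvz0] at hvy
          exact (by simp : ((⊤ : WithTop ℤ) ≠ (k : WithTop ℤ))) hvy
        refine le_antisymm hZ2 ?_
        intro z hz
        rw [hMv] at hz
        obtain ⟨u, huA, huz⟩ := hdiv y z hyne (by rw [hvy]; exact hz)
        obtain ⟨aa, haa⟩ := hres ⟨u, huA⟩
        set mA : A := ⟨u, huA⟩ - algebraMap R A aa with hmA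
        have hmcoe : (mA : K) = u - algebraMap R K aa := by
          rw [hmA]
          push_cast
          congr 1
        have hmK : (mA : K) ∈ A := mA.2
        have hmval : (1 : WithTop ℤ) ≤ v (mA : K) := by
          have hm0 : (0 : WithTop ℤ) ≤ v (mA : K) := (hvRbar _).mp hmK
          by_contra hcon
          have hmne : (mA : K) ≠ 0 := by
            intro h0
            rw [h0, hvz0] at hcon
            exact hcon le_top
          obtain ⟨w, hw⟩ := WithTop.ne_top_iff_exists.mp (hvnetop _ hmne)
          have hw0 : (0:ℤ) ≤ w := by rw [← hw] at hm0; exact_mod_cast hm0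
          have hw1 : ¬ ((1:ℤ) ≤ w) := by
            intro hh
            exact hcon (by rw [← hw]; exact_mod_cast hh)
          have hweq : w = 0 := by omega
          have hvm0 : v (mA : K) = 0 := by rw [← hw, hweq]; rfl
          -- mA is then a unit of A, contradicting membership in the maximal ideal
          have hinv : (mA : K)⁻¹ ∈ A := by
            rw [hvRbar]
            have hh := hvmul (mA : K) (mA : K)⁻¹
            rw [mul_inv_cancel₀ hmne, hv1, hvm0, zero_add] at hh
            rw [← hh]
          have hunit : IsUnit mA := by
            refine isUnit_iff_exists_inv.mpr ⟨⟨(mA : K)⁻¹, hinv⟩, ?_⟩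
            ext
            push_cast
            exact mul_inv_cancel₀ hmne
          exact (IsLocalRing.mem_maximalIdeal mA).mp haa hunit
        have hsplit : z = aa • y + y * (mA : K) := by
          rw [hmcoe, Algebra.smul_def, huz]
          ring
        rw [hsplit]
        refine Z.add_mem (Z.smul_mem aa hyZ) (hZ1 ?_)
        rw [hMv, hvmul, hvy]
        calc ((k + 1 : ℕ) : WithTop ℤ) = (k : WithTop ℤ) + 1 := by push_cast; ring
          _ ≤ (k : WithTop ℤ) + v (mA : K) := add_le_add_right hmval _
      · left
        refine le_antisymm ?_ hZ1
        intro z hz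
        have hzk : z ∈ Mv k := hZ2 hz
        rw [hMv] at hzk ⊢
        by_cases hz0 : z = 0
        · rw [hz0, hvz0]; exact le_top
        · obtain ⟨w, hw⟩ := WithTop.ne_top_iff_exists.mp (hvnetop z hz0)
          have hkw : (k:ℤ) ≤ w := by rw [← hw] at hzk; exact_mod_cast hzk
          have hwk : w ≠ (k:ℤ) := by
            intro hh
            exact hex ⟨z, hz, by rw [← hw, hh]; norm_cast⟩
          rw [← hw]
          exact_mod_cast (by omega : (k + 1 : ℤ) ≤ w)
  have hMlen : ∀ j k : ℕ, Order.krullDim (Set.Icc (Mv (k + j)) (Mv k)) = (j : ℕ) := by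
    intro j
    induction j with
    | zero =>
      intro k
      simpa using krullDim_Icc_self (Mv k)
    | succ j ih =>
      intro k
      have h1 : Order.krullDim (Set.Icc (Mv (k + j + 1)) (Mv (k + j))) = ((1 : ℕ) : WithBot ℕ∞) := by
        rw [Nat.cast_one]; exact hsimple (k + j)
      have hadd := krullDim_Icc_add (hMvanti (k+j) (k+j+1) (by omega))
        (hMvanti k (k+j) (by omega)) h1 (ih k)
      rw [show k + (j+1) = k + j + 1 from by omega]
      rw [hadd]
      norm_cast
      omega
  -- γ = c
  have hγc : γ = c := by
    have h1 : qlen R Rb f = ((γ : ℕ) : WithBot ℕ∞) := by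
      rw [qlen_eq_krullDim_Icc R (le_trans hf1 h1Rb), hγ, hRbMv]
      have h2 := hMlen γ 0
      rwa [zero_add] at h2
    have h3 : (c : WithBot ℕ∞) = ((γ : ℕ) : WithBot ℕ∞) := hc.trans h1
    exact_mod_cast h3.symm
  -- Rmod n is the conductor
  have hRmodn : Rmod n = f := by
    ext y
    rw [hRmod n y, hsc, hγ, ← hγc, hMv]
    constructor
    · exact fun h => h.2
    · intro h
      refine ⟨?_, h⟩
      have : y ∈ Mv γ := by rw [hMv]; exact h
      exact hf1 (hγ ▸ this)
  -- the dual of the conductor is the integral closure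
  have hdualn : (1 : Submodule R K) / Rmod n = Rb := by
    rw [hRmodn]
    apply le_antisymm
    · intro z hz
      rw [Submodule.mem_div_iff_forall_mul_mem] at hz
      by_cases hz0 : z = 0
      · subst hz0; exact Rb.zero_mem
      · have h1 : z * t ^ c ∈ f := by
          rw [hfdef, Submodule.mem_div_iff_forall_mul_mem]
          intro w hw
          rw [mul_assoc]
          apply hz
          rw [hγ, hMv, hvmul, hvtk, ← hγc]
          have hw0 : (0 : WithTop ℤ) ≤ v w := (hvRbar w).mp ((Subalgebra.mem_toSubmodule _).mp hw)
          calc ((γ : ℕ) : WithTop ℤ) = ((γ : ℕ) : WithTop ℤ) + 0 := (add_zero _).symm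
            _ ≤ ((γ : ℕ) : WithTop ℤ) + v w := add_le_add_right hw0 _
        rw [hγ, hMv, hvmul, hvtk, hγc] at h1
        rw [hRbMv, hMv, Nat.cast_zero]
        obtain ⟨w, hw⟩ := WithTop.ne_top_iff_exists.mp (hvnetop z hz0)
        rw [← hw] at h1 ⊢
        have h2 : (c : ℤ) ≤ w + c := by exact_mod_cast h1
        exact_mod_cast (by omega : (0:ℤ) ≤ w)
    · intro u hu
      rw [Submodule.mem_div_iff_forall_mul_mem]
      intro w hw
      rw [hfdef, Submodule.mem_div_iff_forall_mul_mem] at hw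
      rw [mul_comm]
      exact hw u hu
  -- the index i0
  obtain ⟨i0, hi0n, hsi0⟩ : ∃ i0 ≤ n, s i0 = a := by
    apply hsall
    · exact ⟨ya, ⟨hC1 hyaC, hyane⟩, hvya⟩
    · omega
  have hCRmod : (1 : Submodule R K) / blowup R K I = Rmod i0 := by
    ext y
    rw [hRmod i0 y, hsi0, hCMa, Submodule.mem_inf, hMv]
    tauto
  -- characterization of Γ
  have hΓchar : ∀ i, 1 ≤ i → i ≤ n → (i ∈ Γ ↔ i0 < i) := by
    intro i h1i hin
    rw [hΓ]
    simp only [Set.mem_setOf_eq]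
    constructor
    · rintro ⟨-, -, hmem⟩
      obtain ⟨y, ⟨hyC, hyne⟩, hvy⟩ := hmem
      have hyMa : y ∈ Mv a ⊓ 1 := by rw [← hCMa]; exact hyC
      have h2 : (a : WithTop ℤ) ≤ ((s (i-1) : ℕ) : WithTop ℤ) := by
        rw [← hvy]
        have := (Submodule.mem_inf.mp hyMa).1
        rwa [hMv] at this
      have hsle : a ≤ s (i-1) := by exact_mod_cast h2
      by_contra hlt
      push_neg at hlt
      have hlt2 : i - 1 < i0 := by omega
      have hmm := hsmono (Set.mem_Iic.mpr (by omega : i - 1 ≤ n)) (Set.mem_Iic.mpr hi0n) hlt2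
      rw [hsi0] at hmm
      omega
    · intro hi0i
      refine ⟨h1i, hin, ?_⟩
      obtain ⟨y, ⟨hy1, hyne⟩, hvy⟩ := hsval (i-1) (by omega)
      refine ⟨y, ⟨?_, hyne⟩, hvy⟩
      rw [hCMa]
      refine Submodule.mem_inf.mpr ⟨?_, hy1⟩
      rw [hMv, hvy]
      have hsle : a ≤ s (i-1) := by
        rw [← hsi0]
        exact hsmono.monotoneOn (Set.mem_Iic.mpr (by omega)) (Set.mem_Iic.mpr (by omega)) (by omega)
      exact_mod_cast hsle
  -- monotonicity of the duals
  have hRmodanti : ∀ i j, i ≤ j → j ≤ n → Rmod j ≤ Rmod i := by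
    intro i j hij hjn y hy
    rw [hRmod] at hy ⊢
    refine ⟨hy.1, le_trans ?_ hy.2⟩
    have : s i ≤ s j := hsmono.monotoneOn (Set.mem_Iic.mpr (by omega)) (Set.mem_Iic.mpr hjn) hij
    exact_mod_cast this
  have hDmono : ∀ i j, i ≤ j → j ≤ n →
      (1 : Submodule R K) / Rmod i ≤ (1 : Submodule R K) / Rmod j := by
    intro i j hij hjn y hy
    rw [Submodule.mem_div_iff_forall_mul_mem] at hy ⊢
    exact fun z hz => hy z (hRmodanti i j hij hjn hz)
  -- telescoping sum
  have htel : ∀ j, i0 ≤ j → j ≤ n →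
      Order.krullDim (Set.Icc ((1 : Submodule R K) / Rmod i0) ((1 : Submodule R K) / Rmod j)) =
        ((∑ i ∈ Finset.Icc (i0+1) j, r i : ℕ) : WithBot ℕ∞) := by
    intro j
    induction j with
    | zero =>
      intro hij hjn
      have h0 : i0 = 0 := by omega
      subst h0
      rw [Finset.Icc_eq_empty (by omega)]
      simpa using krullDim_Icc_self ((1 : Submodule R K) / Rmod 0)
    | succ j ih =>
      intro hij hjn
      by_cases hij' : i0 = j + 1
      · subst hij'
        rw [Finset.Icc_eq_empty (by omega)]
        simpa using krullDim_Icc_self ((1 : Submodule R K) / Rmod (j+1))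
      · have h1 : i0 ≤ j := by omega
        have h2 := ih h1 (by omega)
        have hrr := hr (j+1) (by omega) hjn
        simp only [Nat.add_sub_cancel] at hrr
        have h3 : Order.krullDim
            (Set.Icc ((1 : Submodule R K) / Rmod j) ((1 : Submodule R K) / Rmod (j+1)))
            = ((r (j+1) : ℕ) : WithBot ℕ∞) := by
          rw [← qlen_eq_krullDim_Icc R (hDmono j (j+1) (by omega) hjn), ← hrr]
        have hadd := krullDim_Icc_add (hDmono i0 j h1 (by omega))
          (hDmono j (j+1) (by omega) hjn) h2 h3
        rw [hadd, Finset.sum_Icc_succ_top (show i0 + 1 ≤ j + 1 by omega)]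
  -- b equals the partial sum of the type sequence
  have hbsum : b = ∑ i ∈ Finset.Icc (i0+1) n, r i := by
    have h1 : (b : WithBot ℕ∞) =
        qlen R ((1 : Submodule R K) / Rmod n) ((1 : Submodule R K) / Rmod i0) := by
      rw [hb, hCRmod, hdualn]
    rw [qlen_eq_krullDim_Icc R (hDmono i0 n hi0n le_rfl), htel n hi0n le_rfl] at h1
    exact_mod_cast h1
  -- the indicator sum
  have hsum : ∑ i ∈ Finset.Icc 1 n, Γ.indicator (fun j => (r j : ℤ)) i
      = ∑ i ∈ Finset.Icc (i0+1) n, (r i : ℤ) := by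
    rw [Finset.sum_indicator_eq_sum_filter]
    have hfilter : Finset.filter (fun i => i ∈ Γ) (Finset.Icc 1 n) = Finset.Icc (i0+1) n := by
      ext i
      simp only [Finset.mem_filter, Finset.mem_Icc]
      constructor
      · rintro ⟨⟨hh1, hh2⟩, hh3⟩
        exact ⟨by have := (hΓchar i hh1 hh2).mp hh3; omega, hh2⟩
      · rintro ⟨hh1, hh2⟩
        exact ⟨⟨by omega, hh2⟩, (hΓchar i (by omega) hh2).mpr (by omega)⟩
    rw [hfilter]
  rw [hd, hsum, hbsum]
  push_cast
  ring

end
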